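/- For each vertex i ∈ U of the assignment game, let u_i^h (resp. u_i^l) be the supremum (resp. infimum) of i's profit over all core imputations, and similarly define v^h, v^l for V. Then (u^h, v^l) and (u^l, v^h) are themselves core imputations. -/

import Mathlib

open scoped Classical

/-- `M` is a matching in the bipartite graph with edge set `E`. -/
def IsMatching {U V : Type*} (E M : Finset (U × V)) : Prop :=
  M ⊆ E ∧ (∀ e ∈ M, ∀ e' ∈ M, e.1 = e'.1 → e = e') ∧
    (∀ e ∈ M, ∀ e' ∈ M, e.2 = e'.2 → e = e')

/-- Total weight of a set of edges. -/
def matchWeight {U V : Type*} (w : U × V → ℚ) (M : Finset (U × V)) : ℚ :=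
  ∑ e ∈ M, w e

/-- Maximum weight of a matching in `(E, w)`. -/
noncomputable def maxWeight {U V : Type*} [DecidableEq U] [DecidableEq V]
    (E : Finset (U × V)) (w : U × V → ℚ) : ℚ :=
  ((E.powerset).filter (fun M => IsMatching E M)).sup'
    ⟨∅, by simp [IsMatching]⟩ (matchWeight w)

/-- `M` is a maximum weight matching. -/
def IsMaxMatching {U V : Type*} [DecidableEq U] [DecidableEq V]
    (E : Finset (U × V)) (w : U × V → ℚ) (M : Finset (U × V)) : Prop :=
  IsMatching E M ∧ matchWeight w M = maxWeight E w

/-- Core imputations of the assignment game (Shapley–Shubik characterization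
as optimal dual solutions). -/
def InCore {U V : Type*} [Fintype U] [Fintype V] [DecidableEq U] [DecidableEq V]
    (E : Finset (U × V)) (w : U × V → ℚ) (u : U → ℚ) (v : V → ℚ) : Prop :=
  (∀ i, 0 ≤ u i) ∧ (∀ j, 0 ≤ v j) ∧ (∀ e ∈ E, w e ≤ u e.1 + v e.2) ∧
    (∑ i, u i) + (∑ j, v j) = maxWeight E w

/-- A vertex (from either side) is matched in `M`. -/
def MatchedIn {U V : Type*} (M : Finset (U × V)) : U ⊕ V → Prop
  | Sum.inl i => ∃ j, (i, j) ∈ M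
  | Sum.inr j => ∃ i, (i, j) ∈ M

/-- A vertex is essential if it is matched in every maximum weight matching. -/
def EssentialVertex {U V : Type*} [DecidableEq U] [DecidableEq V]
    (E : Finset (U × V)) (w : U × V → ℚ) (q : U ⊕ V) : Prop :=
  ∀ M, IsMaxMatching E w M → MatchedIn M q

section Aux
variable {U V : Type*} [Fintype U] [Fintype V] [DecidableEq U] [DecidableEq V]
variable {E : Finset (U × V)} {w : U × V → ℚ}

lemma weak_duality {u : U → ℚ} {v : V → ℚ}
    (hu : ∀ i, 0 ≤ u i) (hv : ∀ j, 0 ≤ v j)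
    (he : ∀ e ∈ E, w e ≤ u e.1 + v e.2) :
    maxWeight E w ≤ (∑ i, u i) + (∑ j, v j) := by
  apply Finset.sup'_le
  intro M hM
  rw [Finset.mem_filter, Finset.mem_powerset] at hM
  obtain ⟨hME, hMatch⟩ := hM
  have hinj1 : ∀ e ∈ M, ∀ e' ∈ M, Prod.fst e = Prod.fst e' → e = e' :=
    fun e he e' he' h => hMatch.2.1 e he e' he' h
  have hinj2 : ∀ e ∈ M, ∀ e' ∈ M, Prod.snd e = Prod.snd e' → e = e' :=
    fun e he e' he' h => hMatch.2.2 e he e' he' h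
  have h1 : ∑ e ∈ M, u e.1 ≤ ∑ i, u i := by
    have : (∑ i ∈ M.image Prod.fst, u i) = ∑ e ∈ M, u e.1 :=
      Finset.sum_image hinj1
    rw [← this]
    exact Finset.sum_le_sum_of_subset_of_nonneg (Finset.subset_univ _)
      (fun i _ _ => hu i)
  have h2 : ∑ e ∈ M, v e.2 ≤ ∑ j, v j := by
    have : (∑ j ∈ M.image Prod.snd, v j) = ∑ e ∈ M, v e.2 :=
      Finset.sum_image hinj2
    rw [← this]
    exact Finset.sum_le_sum_of_subset_of_nonneg (Finset.subset_univ _)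
      (fun j _ _ => hv j)
  calc matchWeight w M = ∑ e ∈ M, w e := rfl
    _ ≤ ∑ e ∈ M, (u e.1 + v e.2) :=
        Finset.sum_le_sum (fun e he' => he e (hMatch.1 he'))
    _ = ∑ e ∈ M, u e.1 + ∑ e ∈ M, v e.2 := Finset.sum_add_distrib
    _ ≤ (∑ i, u i) + (∑ j, v j) := add_le_add h1 h2

lemma core_lattice {u u' : U → ℚ} {v v' : V → ℚ}
    (h : InCore E w u v) (h' : InCore E w u' v') :
    InCore E w (fun i => max (u i) (u' i)) (fun j => min (v j) (v' j)) ∧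
    InCore E w (fun i => min (u i) (u' i)) (fun j => max (v j) (v' j)) := by
  obtain ⟨hu, hv, he, hs⟩ := h
  obtain ⟨hu', hv', he', hs'⟩ := h'
  have feas1 : ∀ e ∈ E, w e ≤ max (u e.1) (u' e.1) + min (v e.2) (v' e.2) := by
    intro e heE
    rcases le_total (v e.2) (v' e.2) with hle | hle
    · calc w e ≤ u e.1 + v e.2 := he e heE
        _ ≤ _ := add_le_add (le_max_left _ _) (by simp [hle])
    · calc w e ≤ u' e.1 + v' e.2 := he' e heE
        _ ≤ _ := add_le_add (le_max_right _ _) (by simp [hle])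
  have feas2 : ∀ e ∈ E, w e ≤ min (u e.1) (u' e.1) + max (v e.2) (v' e.2) := by
    intro e heE
    rcases le_total (u e.1) (u' e.1) with hle | hle
    · calc w e ≤ u e.1 + v e.2 := he e heE
        _ ≤ _ := add_le_add (by simp [hle]) (le_max_left _ _)
    · calc w e ≤ u' e.1 + v' e.2 := he' e heE
        _ ≤ _ := add_le_add (by simp [hle]) (le_max_right _ _)
  have hA : maxWeight E w ≤ (∑ i, max (u i) (u' i)) + (∑ j, min (v j) (v' j)) :=
    weak_duality (fun i => le_trans (hu i) (le_max_left _ _))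
      (fun j => le_min (hv j) (hv' j)) feas1
  have hB : maxWeight E w ≤ (∑ i, min (u i) (u' i)) + (∑ j, max (v j) (v' j)) :=
    weak_duality (fun i => le_min (hu i) (hu' i))
      (fun j => le_trans (hv j) (le_max_left _ _)) feas2
  have hsum : ((∑ i, max (u i) (u' i)) + (∑ j, min (v j) (v' j))) +
      ((∑ i, min (u i) (u' i)) + (∑ j, max (v j) (v' j))) =
      maxWeight E w + maxWeight E w := by
    have e1 : (∑ i, max (u i) (u' i)) + (∑ i, min (u i) (u' i)) =
        (∑ i, u i) + (∑ i, u' i) := by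
      rw [← Finset.sum_add_distrib, ← Finset.sum_add_distrib]
      exact Finset.sum_congr rfl (fun i _ => max_add_min _ _)
    have e2 : (∑ j, min (v j) (v' j)) + (∑ j, max (v j) (v' j)) =
        (∑ j, v j) + (∑ j, v' j) := by
      rw [← Finset.sum_add_distrib, ← Finset.sum_add_distrib]
      exact Finset.sum_congr rfl (fun j _ => min_add_max _ _)
    linarith [hs, hs']
  refine ⟨⟨fun i => le_trans (hu i) (le_max_left _ _),
    fun j => le_min (hv j) (hv' j), feas1, by linarith⟩,
    ⟨fun i => le_min (hu i) (hu' i),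
    fun j => le_trans (hv j) (le_max_left _ _), feas2, by linarith⟩⟩

def meetP (p q : (U → ℚ) × (V → ℚ)) : (U → ℚ) × (V → ℚ) :=
  (fun i => max (p.1 i) (q.1 i), fun j => min (p.2 j) (q.2 j))

def joinP (p q : (U → ℚ) × (V → ℚ)) : (U → ℚ) × (V → ℚ) :=
  (fun i => min (p.1 i) (q.1 i), fun j => max (p.2 j) (q.2 j))

lemma foldl_meet_core (l : List ((U → ℚ) × (V → ℚ))) :
    ∀ p0 : (U → ℚ) × (V → ℚ), InCore E w p0.1 p0.2 →
    (∀ p ∈ l, InCore E w p.1 p.2) →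
    InCore E w (l.foldl meetP p0).1 (l.foldl meetP p0).2 ∧
    (∀ i, p0.1 i ≤ (l.foldl meetP p0).1 i) ∧
    (∀ j, (l.foldl meetP p0).2 j ≤ p0.2 j) ∧
    (∀ p ∈ l, (∀ i, p.1 i ≤ (l.foldl meetP p0).1 i) ∧
      (∀ j, (l.foldl meetP p0).2 j ≤ p.2 j)) := by
  induction l with
  | nil => exact fun p0 h0 _ => ⟨h0, fun i => le_refl _, fun j => le_refl _, by simp⟩
  | cons q l ih =>
    intro p0 h0 hl
    have hq : InCore E w q.1 q.2 := hl q List.mem_cons_self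
    have hmeet := (core_lattice h0 hq).1
    have hrec := ih (meetP p0 q) hmeet (fun p hp => hl p (List.mem_cons_of_mem q hp))
    simp only [List.foldl_cons]
    refine ⟨hrec.1, ?_, ?_, ?_⟩
    · exact fun i => le_trans (le_max_left _ _) (hrec.2.1 i)
    · exact fun j => le_trans (hrec.2.2.1 j) (min_le_left _ _)
    · intro p hp
      rcases List.mem_cons.mp hp with rfl | hp'
      · exact ⟨fun i => le_trans (le_max_right _ _) (hrec.2.1 i),
          fun j => le_trans (hrec.2.2.1 j) (min_le_right _ _)⟩
      · exact hrec.2.2.2 p hp'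

lemma foldl_join_core (l : List ((U → ℚ) × (V → ℚ))) :
    ∀ p0 : (U → ℚ) × (V → ℚ), InCore E w p0.1 p0.2 →
    (∀ p ∈ l, InCore E w p.1 p.2) →
    InCore E w (l.foldl joinP p0).1 (l.foldl joinP p0).2 ∧
    (∀ i, (l.foldl joinP p0).1 i ≤ p0.1 i) ∧
    (∀ j, p0.2 j ≤ (l.foldl joinP p0).2 j) ∧
    (∀ p ∈ l, (∀ i, (l.foldl joinP p0).1 i ≤ p.1 i) ∧
      (∀ j, p.2 j ≤ (l.foldl joinP p0).2 j)) := by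
  induction l with
  | nil => exact fun p0 h0 _ => ⟨h0, fun i => le_refl _, fun j => le_refl _, by simp⟩
  | cons q l ih =>
    intro p0 h0 hl
    have hq : InCore E w q.1 q.2 := hl q List.mem_cons_self
    have hjoin := (core_lattice h0 hq).2
    have hrec := ih (joinP p0 q) hjoin (fun p hp => hl p (List.mem_cons_of_mem q hp))
    simp only [List.foldl_cons]
    refine ⟨hrec.1, ?_, ?_, ?_⟩
    · exact fun i => le_trans (hrec.2.1 i) (min_le_left _ _)
    · exact fun j => le_trans (le_max_left _ _) (hrec.2.2.1 j)
    · intro p hp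
      rcases List.mem_cons.mp hp with rfl | hp'
      · exact ⟨fun i => le_trans (hrec.2.1 i) (min_le_right _ _),
          fun j => le_trans (le_max_right _ _) (hrec.2.2.1 j)⟩
      · exact hrec.2.2.2 p hp'

end Aux

/-- The two extreme imputations `(u^h, v^l)` and `(u^l, v^h)`, built from the
attained maximum/minimum profit of each vertex over the core, are themselves
core imputations. -/
theorem extreme_imputations_in_core {U V : Type*} [Fintype U] [Fintype V]
    [DecidableEq U] [DecidableEq V]
    (E : Finset (U × V)) (w : U × V → ℚ)
    (uh ul : U → ℚ) (vh vl : V → ℚ)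
    (huh : ∀ i, IsGreatest {x : ℚ | ∃ u v, InCore E w u v ∧ u i = x} (uh i))
    (hul : ∀ i, IsLeast {x : ℚ | ∃ u v, InCore E w u v ∧ u i = x} (ul i))
    (hvh : ∀ j, IsGreatest {x : ℚ | ∃ u v, InCore E w u v ∧ v j = x} (vh j))
    (hvl : ∀ j, IsLeast {x : ℚ | ∃ u v, InCore E w u v ∧ v j = x} (vl j)) :
    InCore E w uh vl ∧ InCore E w ul vh := by
  rcases isEmpty_or_nonempty (U ⊕ V) with hemp | hne
  · -- degenerate: no vertices at all
    have hU : IsEmpty U := ⟨fun i => hemp.false (Sum.inl i)⟩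
    have hV : IsEmpty V := ⟨fun j => hemp.false (Sum.inr j)⟩
    have hE : E = ∅ := Finset.eq_empty_of_isEmpty E
    have hmw : maxWeight E w = 0 := by
      subst hE
      have hfil : Finset.filter (fun M => IsMatching ∅ M)
          ((∅ : Finset (U × V)).powerset) = {∅} := by
        ext M
        simp [IsMatching, Finset.subset_empty]
      rw [maxWeight]
      simp only [hfil, Finset.sup'_singleton, matchWeight, Finset.sum_empty]
    constructor <;>
      exact ⟨fun i => isEmptyElim i, fun j => isEmptyElim j,
        fun e _ => isEmptyElim e.1, by simp [hmw]⟩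
  · obtain ⟨q0⟩ := hne
    choose fu fv hf hfe using fun i => (huh i).1
    choose gu gv hg hge using fun j => (hvl j).1
    choose fu' fv' hf' hfe' using fun i => (hul i).1
    choose gu' gv' hg' hge' using fun j => (hvh j).1
    set pick : U ⊕ V → (U → ℚ) × (V → ℚ) :=
      fun q => Sum.rec (fun i => (fu i, fv i)) (fun j => (gu j, gv j)) q with hpick
    set pick' : U ⊕ V → (U → ℚ) × (V → ℚ) :=
      fun q => Sum.rec (fun i => (fu' i, fv' i)) (fun j => (gu' j, gv' j)) q with hpick'
    have hpickcore : ∀ q, InCore E w (pick q).1 (pick q).2 := by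
      intro q; cases q with
      | inl i => exact hf i
      | inr j => exact hg j
    have hpickcore' : ∀ q, InCore E w (pick' q).1 (pick' q).2 := by
      intro q; cases q with
      | inl i => exact hf' i
      | inr j => exact hg' j
    set L : List ((U → ℚ) × (V → ℚ)) :=
      (Finset.univ : Finset (U ⊕ V)).toList.map pick with hL
    set L' : List ((U → ℚ) × (V → ℚ)) :=
      (Finset.univ : Finset (U ⊕ V)).toList.map pick' with hL'
    have hmemL : ∀ q, pick q ∈ L := fun q =>
      List.mem_map_of_mem (f := pick) (Finset.mem_toList.2 (Finset.mem_univ q))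
    have hmemL' : ∀ q, pick' q ∈ L' := fun q =>
      List.mem_map_of_mem (f := pick') (Finset.mem_toList.2 (Finset.mem_univ q))
    have hLcore : ∀ p ∈ L, InCore E w p.1 p.2 := by
      intro p hp
      obtain ⟨q, _, rfl⟩ := List.mem_map.mp hp
      exact hpickcore q
    have hLcore' : ∀ p ∈ L', InCore E w p.1 p.2 := by
      intro p hp
      obtain ⟨q, _, rfl⟩ := List.mem_map.mp hp
      exact hpickcore' q
    obtain ⟨hFcore, _, _, hFbd⟩ := foldl_meet_core L (pick q0) (hpickcore q0) hLcore
    obtain ⟨hGcore, _, _, hGbd⟩ := foldl_join_core L' (pick' q0) (hpickcore' q0) hLcore'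
    set F := L.foldl meetP (pick q0) with hF
    set G := L'.foldl joinP (pick' q0) with hG
    have hF1 : F.1 = uh := by
      funext i
      refine le_antisymm ((huh i).2 ⟨F.1, F.2, hFcore, rfl⟩) ?_
      have := (hFbd (pick (Sum.inl i)) (hmemL (Sum.inl i))).1 i
      simpa [hpick, hfe i] using this
    have hF2 : F.2 = vl := by
      funext j
      refine le_antisymm ?_ ((hvl j).2 ⟨F.1, F.2, hFcore, rfl⟩)
      have := (hFbd (pick (Sum.inr j)) (hmemL (Sum.inr j))).2 j
      simpa [hpick, hge j] using this
    have hG1 : G.1 = ul := by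
      funext i
      refine le_antisymm ?_ ((hul i).2 ⟨G.1, G.2, hGcore, rfl⟩)
      have := (hGbd (pick' (Sum.inl i)) (hmemL' (Sum.inl i))).1 i
      simpa [hpick', hfe' i] using this
    have hG2 : G.2 = vh := by
      funext j
      refine le_antisymm ((hvh j).2 ⟨G.1, G.2, hGcore, rfl⟩) ?_
      have := (hGbd (pick' (Sum.inr j)) (hmemL' (Sum.inr j))).2 j
      simpa [hpick', hge' j] using this
    rw [← hF1, ← hF2, ← hG1, ← hG2]
    exact ⟨hFcore, hGcore⟩
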